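/- In the renewal setup, let 𝕊 be a finite set and let (r_k)_{k≥0} be 𝕊-valued random variables (the mode active on [t_k, t_{k+1})). For each i ∈ 𝕊 let λ_i : ℝ → ℝ be continuous with |λ_i(s)| ≤ L for all s and some constant L > 0, and suppose the per-interval integrals W_k = ∫_{t_{k−1}}^{t_k} λ_{r_{k−1}}(h) dh, k ≥ 1, form an i.i.d. integrable sequence with E[W₁] ≤ w̄. Let μ ≥ 1 be a constant with (w̄ + ln μ)/θ < 0, and let α₁, α₂ be class-K∞ functions. Suppose that for almost every ω there is a continuous trajectory x(ω,·) : [0,∞) → ℝⁿ and functions V_i : [0,∞) × ℝⁿ → ℝ such that: α₁(‖y‖) ≤ V_i(t, y) ≤ α₂(‖y‖) for all i, t, y; for each k the map t ↦ V_{r_k}(t, x(ω,t)) is continuous on [t_k, t_{k+1}], differentiable on (t_k, t_{k+1}) with derivative ≤ λ_{r_k}(t)·V_{r_k}(t, x(ω,t)); and V_{r_k}(t_k, x(ω,t_k)) ≤ μ·V_{r_{k−1}}(t_k, x(ω,t_k)) for each k ≥ 1. Then P[ x(t) → 0 as t → ∞ ] = 1. -/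

import Mathlib

open Set Filter MeasureTheory ProbabilityTheory
open Topology

/-- The renewal (arrival) times: `renewalTime S k ω = S 1 ω + ⋯ + S k ω`, with
`renewalTime S 0 ω = 0`. -/
noncomputable def renewalTime {Ω : Type*} (S : ℕ → Ω → ℝ) (k : ℕ) (ω : Ω) : ℝ :=
  ∑ j ∈ Finset.Icc 1 k, S j ω

/-- A function `α : [0,∞) → [0,∞)` is of class K∞ if it is continuous, strictly
increasing, vanishes at `0`, and tends to infinity. -/
def IsClassKInf (α : ℝ → ℝ) : Prop :=
  ContinuousOn α (Set.Ici 0) ∧ StrictMonoOn α (Set.Ici 0) ∧ α 0 = 0 ∧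
    (∀ s ≥ (0 : ℝ), 0 ≤ α s) ∧ Filter.Tendsto α Filter.atTop Filter.atTop

lemma gronwall_exp {f g : ℝ → ℝ} {a b : ℝ} (hab : a ≤ b)
    (hf : ContinuousOn f (Set.Icc a b))
    (hd : DifferentiableOn ℝ f (Set.Ioo a b))
    (hle : ∀ s ∈ Set.Ioo a b, deriv f s ≤ g s * f s)
    (hg : Continuous g) :
    ∀ t ∈ Set.Icc a b, f t ≤ f a * Real.exp (∫ h in a..t, g h) := by
  set G : ℝ → ℝ := fun t => ∫ h in a..t, g h with hGdef
  have hG : ∀ s : ℝ, HasDerivAt G (g s) s := fun s =>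
    intervalIntegral.integral_hasDerivAt_right (hg.intervalIntegrable a s)
      (hg.stronglyMeasurableAtFilter _ _) hg.continuousAt
  have hGcont : Continuous G :=
    continuous_iff_continuousAt.2 (fun s => (hG s).continuousAt)
  set u : ℝ → ℝ := fun s => f s * Real.exp (-G s) with hudef
  have hu_cont : ContinuousOn u (Set.Icc a b) :=
    hf.mul ((Real.continuous_exp.comp hGcont.neg).continuousOn)
  have hderiv : ∀ s ∈ Set.Ioo a b,
      HasDerivAt u (deriv f s * Real.exp (-G s) + f s * (Real.exp (-G s) * (-g s))) s := by
    intro s hs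
    have hfd : HasDerivAt f (deriv f s) s :=
      (((hd s hs).differentiableAt (isOpen_Ioo.mem_nhds hs)).hasDerivAt)
    exact hfd.mul ((hG s).neg.exp)
  have hanti : AntitoneOn u (Set.Icc a b) := by
    apply antitoneOn_of_deriv_nonpos (convex_Icc a b) hu_cont
    · intro s hs
      rw [interior_Icc] at hs
      exact (hderiv s hs).differentiableAt.differentiableWithinAt
    · intro s hs
      rw [interior_Icc] at hs
      rw [(hderiv s hs).deriv]
      have h1 := hle s hs
      have h2 := Real.exp_pos (-G s)
      nlinarith
  intro t ht
  have h := hanti (left_mem_Icc.2 hab) ht ht.1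
  have hGa : G a = 0 := intervalIntegral.integral_same
  have hua : u a = f a := by simp [hudef, hGa]
  rw [hua] at h
  have hpos := Real.exp_pos (G t)
  have key : u t * Real.exp (G t) = f t := by
    simp only [hudef]
    rw [mul_assoc, ← Real.exp_add]
    simp
  calc f t = u t * Real.exp (G t) := key.symm
    _ ≤ f a * Real.exp (G t) := by nlinarith

/-- Almost-sure attractivity for time-varying systems under renewal-process switching:
with K∞-sandwiched mode-dependent indefinite Lyapunov functions whose rates have
i.i.d. per-dwell-interval integrals `W_k` with mean at most `w̄`, and a common jump
factor `μ ≥ 1`, if `(w̄ + ln μ)/θ < 0` then almost surely `x(t) → 0` as `t → ∞`. -/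
theorem stmt_15 {Ω : Type*} [MeasurableSpace Ω] (P : Measure Ω) [IsProbabilityMeasure P]
    {𝕊 : Type*} [Fintype 𝕊] (n : ℕ)
    -- the i.i.d. dwell times
    (S : ℕ → Ω → ℝ) (hSmeas : ∀ k, Measurable (S k))
    (hSindep : iIndepFun S P)
    (hSident : ∀ k ≥ 1, IdentDistrib (S k) (S 1) P P)
    (hSpos : ∀ᵐ ω ∂P, 0 < S 1 ω)
    (hSint : Integrable (S 1) P)
    (θ : ℝ) (hθpos : 0 < θ) (hθ : (∫ ω, S 1 ω ∂P) = θ)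
    -- the random modes
    (r : ℕ → Ω → 𝕊)
    -- the mode-dependent rates, continuous and uniformly bounded
    (lam : 𝕊 → ℝ → ℝ) (hlam : ∀ i, Continuous (lam i))
    (L : ℝ) (hL : 0 < L) (hlamL : ∀ i, ∀ s : ℝ, |lam i s| ≤ L)
    -- the per-interval integrals form an i.i.d. integrable sequence with mean `≤ w̄`
    (W : ℕ → Ω → ℝ) (hWmeas : ∀ k, Measurable (W k))
    (hW : ∀ᵐ ω ∂P, ∀ k, W (k + 1) ω =
      ∫ h in (renewalTime S k ω)..(renewalTime S (k + 1) ω), lam (r k ω) h)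
    (hWindep : iIndepFun W P)
    (hWident : ∀ k ≥ 1, IdentDistrib (W k) (W 1) P P)
    (hWint : Integrable (W 1) P)
    (wbar : ℝ) (hwbar : (∫ ω, W 1 ω ∂P) ≤ wbar)
    -- jump factor and drift condition
    (μ : ℝ) (hμ : 1 ≤ μ) (hdrift : (wbar + Real.log μ) / θ < 0)
    -- class-K∞ sandwich functions
    (α₁ α₂ : ℝ → ℝ) (hα₁ : IsClassKInf α₁) (hα₂ : IsClassKInf α₂)
    -- pathwise trajectory and Lyapunov functions
    (x : Ω → ℝ → EuclideanSpace ℝ (Fin n))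
    (V : Ω → 𝕊 → ℝ → EuclideanSpace ℝ (Fin n) → ℝ)
    (hx_cont : ∀ᵐ ω ∂P, ContinuousOn (x ω) (Set.Ici 0))
    (hsandwich : ∀ᵐ ω ∂P, ∀ i, ∀ s ≥ (0 : ℝ), ∀ y : EuclideanSpace ℝ (Fin n),
      α₁ ‖y‖ ≤ V ω i s y ∧ V ω i s y ≤ α₂ ‖y‖)
    -- Lyapunov condition (ii)
    (hV_cont : ∀ᵐ ω ∂P, ∀ k, ContinuousOn (fun s => V ω (r k ω) s (x ω s))
      (Set.Icc (renewalTime S k ω) (renewalTime S (k + 1) ω)))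
    (hV_diff : ∀ᵐ ω ∂P, ∀ k, DifferentiableOn ℝ (fun s => V ω (r k ω) s (x ω s))
      (Set.Ioo (renewalTime S k ω) (renewalTime S (k + 1) ω)))
    (hV_deriv : ∀ᵐ ω ∂P, ∀ k,
      ∀ s ∈ Set.Ioo (renewalTime S k ω) (renewalTime S (k + 1) ω),
        deriv (fun s' => V ω (r k ω) s' (x ω s')) s ≤
          lam (r k ω) s * V ω (r k ω) s (x ω s))
    -- Lyapunov condition (iii)
    (hjump : ∀ᵐ ω ∂P, ∀ k,
      V ω (r (k + 1) ω) (renewalTime S (k + 1) ω) (x ω (renewalTime S (k + 1) ω)) ≤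
        μ * V ω (r k ω) (renewalTime S (k + 1) ω) (x ω (renewalTime S (k + 1) ω))) :
    ∀ᵐ ω ∂P, Filter.Tendsto (fun s => x ω s) Filter.atTop (nhds 0) := by
  have hμpos : (0 : ℝ) < μ := lt_of_lt_of_le one_pos hμ
  have hθ' : wbar + Real.log μ < 0 := by
    by_contra h
    push_neg at h
    exact absurd (div_nonneg h hθpos.le) (not_le.2 hdrift)
  set EW : ℝ := ∫ ω, W 1 ω ∂P with hEWdef
  -- SLLN for S
  have hSLLNS : ∀ᵐ ω ∂P, Tendsto (fun n : ℕ =>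
      (∑ i ∈ Finset.range n, S (i + 1) ω) / n) atTop (𝓝 θ) := by
    have h := strong_law_ae_real (fun i => S (i + 1)) hSint
      (fun i j hij => hSindep.indepFun (by omega))
      (fun i => hSident (i + 1) (Nat.le_add_left 1 i))
    rw [show (P[(fun i => S (i + 1)) 0]) = θ from hθ] at h
    exact h
  -- SLLN for W
  have hSLLNW : ∀ᵐ ω ∂P, Tendsto (fun n : ℕ =>
      (∑ i ∈ Finset.range n, W (i + 1) ω) / n) atTop (𝓝 EW) := by
    exact strong_law_ae_real (fun i => W (i + 1)) hWint
      (fun i j hij => hWindep.indepFun (by omega))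
      (fun i => hWident (i + 1) (Nat.le_add_left 1 i))
  -- positivity of all dwell times
  have hpos : ∀ᵐ ω ∂P, ∀ k : ℕ, 0 < S (k + 1) ω := by
    rw [ae_all_iff]
    intro k
    exact (hSident (k + 1) (Nat.le_add_left 1 k)).symm.ae_snd
      (p := fun y => 0 < y) measurableSet_Ioi hSpos
  filter_upwards [hpos, hSLLNS, hSLLNW, hW, hsandwich, hV_cont, hV_diff, hV_deriv, hjump]
    with ω hposω hA hB hWω hsand hVc hVd hVder hj
  have hτeq : ∀ k, renewalTime S k ω = renewalTime S k ω := fun _ => rfl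
  set τ : ℕ → ℝ := fun k => renewalTime S k ω with hτdef
  have hτr : ∀ k, renewalTime S k ω = τ k := fun _ => rfl
  simp only [hτr] at hWω hVc hVd hVder hj
  have hτ0 : τ 0 = 0 := by simp [hτdef, renewalTime]
  have hτs : ∀ k, τ (k + 1) = τ k + S (k + 1) ω := by
    intro k
    simp only [hτdef, renewalTime]
    exact Finset.sum_Icc_succ_top (Nat.le_add_left 1 k) _
  have hτrange : ∀ k, τ k = ∑ i ∈ Finset.range k, S (i + 1) ω := by
    intro k
    induction k with
    | zero => simp [hτ0]
    | succ k ih => rw [hτs, Finset.sum_range_succ, ih]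
  have hτmono : StrictMono τ :=
    strictMono_nat_of_lt_succ (fun k => by have := hposω k; rw [hτs]; linarith)
  have hτnn : ∀ k, 0 ≤ τ k := fun k => hτ0 ▸ hτmono.monotone (Nat.zero_le k)
  have hA' : Tendsto (fun k : ℕ => τ k / k) atTop (𝓝 θ) :=
    hA.congr (fun k => by rw [← hτrange])
  have hτtop : Tendsto τ atTop atTop := by
    have h1 : Tendsto (fun k : ℕ => (k : ℝ) * (τ k / k)) atTop atTop :=
      Filter.Tendsto.atTop_mul_pos hθpos tendsto_natCast_atTop_atTop hA'
    apply h1.congr'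
    filter_upwards [eventually_ge_atTop 1] with k hk
    have : (k : ℝ) ≠ 0 := Nat.cast_ne_zero.2 (by omega)
    field_simp
  have hrat : Tendsto (fun k : ℕ => ((k : ℝ) + 1) / k) atTop (𝓝 1) := by
    have h : Tendsto (fun k : ℕ => 1 + 1 / (k : ℝ)) atTop (𝓝 (1 + 0)) :=
      tendsto_const_nhds.add tendsto_one_div_atTop_nhds_zero_nat
    rw [add_zero] at h
    apply h.congr'
    filter_upwards [eventually_ge_atTop 1] with k hk
    have hk0 : (k : ℝ) ≠ 0 := Nat.cast_ne_zero.2 (by omega)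
    field_simp
  -- S (k+1) / k → 0
  have hS1k : Tendsto (fun k : ℕ => S (k + 1) ω / k) atTop (𝓝 0) := by
    have h1 : Tendsto (fun k : ℕ => τ (k + 1) / k) atTop (𝓝 θ) := by
      have h2 : Tendsto (fun k : ℕ => τ (k + 1) / ((k : ℝ) + 1)) atTop (𝓝 θ) := by
        have := hA'.comp (tendsto_add_atTop_nat 1)
        apply this.congr
        intro k
        simp only [Function.comp]
        push_cast
        try ring_nf
      have h3 := h2.mul hrat
      rw [mul_one] at h3
      apply h3.congr'
      filter_upwards [eventually_ge_atTop 1] with k hk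
      have hk0 : (k : ℝ) ≠ 0 := Nat.cast_ne_zero.2 (by omega)
      have hk1 : (k : ℝ) + 1 ≠ 0 := by positivity
      field_simp
      try ring
    have h4 := h1.sub hA'
    rw [sub_self] at h4
    apply h4.congr
    intro k
    rw [hτs k]
    ring
  -- partial sums of W
  set Sw : ℕ → ℝ := fun k => ∑ i ∈ Finset.range k, W (i + 1) ω with hSwdef
  -- the exponent
  set e : ℕ → ℝ := fun k => Real.log μ * k + Sw k + L * S (k + 1) ω with hedef
  have hℓ : Real.log μ + EW + L * 0 < 0 := by
    rw [mul_zero, add_zero]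
    linarith
  have hek : Tendsto (fun k : ℕ => e k / k) atTop (𝓝 (Real.log μ + EW + L * 0)) := by
    have h1 : Tendsto (fun k : ℕ => Real.log μ + Sw k / k + L * (S (k + 1) ω / k))
        atTop (𝓝 (Real.log μ + EW + L * 0)) :=
      (tendsto_const_nhds.add hB).add (hS1k.const_mul L)
    apply h1.congr'
    filter_upwards [eventually_ge_atTop 1] with k hk
    have hk0 : (k : ℝ) ≠ 0 := Nat.cast_ne_zero.2 (by omega)
    simp only [hedef]
    field_simp
    try ring
  have hetop : Tendsto e atTop atBot := by
    have h1 : Tendsto (fun k : ℕ => (k : ℝ) * (e k / k)) atTop atBot :=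
      Filter.Tendsto.atTop_mul_neg hℓ tendsto_natCast_atTop_atTop hek
    apply h1.congr'
    filter_upwards [eventually_ge_atTop 1] with k hk
    have hk0 : (k : ℝ) ≠ 0 := Nat.cast_ne_zero.2 (by omega)
    field_simp
  -- Lyapunov values at renewal times
  set v : ℕ → ℝ := fun k => V ω (r k ω) (τ k) (x ω (τ k)) with hvdef
  have hvnn : ∀ k, 0 ≤ v k := fun k =>
    le_trans (hα₁.2.2.2.1 ‖x ω (τ k)‖ (norm_nonneg _))
      ((hsand (r k ω) (τ k) (hτnn k) (x ω (τ k))).1)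
  -- Grönwall on each interval
  have hGr : ∀ k, ∀ t ∈ Set.Icc (τ k) (τ (k + 1)),
      V ω (r k ω) t (x ω t) ≤ v k * Real.exp (∫ h in (τ k)..t, lam (r k ω) h) :=
    fun k => gronwall_exp (hτmono (lt_add_one k)).le (hVc k) (hVd k) (hVder k) (hlam _)
  -- inductive bound on v
  have hv : ∀ k, v k ≤ v 0 * Real.exp (Real.log μ * k + Sw k) := by
    intro k
    induction k with
    | zero => simp [hSwdef]
    | succ k ih =>
      have h1 := hj k
      have h2 := hGr k (τ (k + 1)) ⟨(hτmono (lt_add_one k)).le, le_rfl⟩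
      rw [← hWω k] at h2
      have h3 : v (k + 1) ≤ μ * (v k * Real.exp (W (k + 1) ω)) :=
        le_trans h1 (mul_le_mul_of_nonneg_left h2 hμpos.le)
      have h4 : μ * (v k * Real.exp (W (k + 1) ω)) ≤
          μ * (v 0 * Real.exp (Real.log μ * k + Sw k) * Real.exp (W (k + 1) ω)) :=
        mul_le_mul_of_nonneg_left
          (mul_le_mul_of_nonneg_right ih (Real.exp_pos _).le) hμpos.le
      have h5 : μ * (v 0 * Real.exp (Real.log μ * k + Sw k) * Real.exp (W (k + 1) ω)) =
          v 0 * Real.exp (Real.log μ * (k + 1 : ℕ) + Sw (k + 1)) := by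
        simp only [hSwdef, Finset.sum_range_succ]
        push_cast
        rw [show Real.log μ * ((k : ℝ) + 1) +
            ((∑ i ∈ Finset.range k, W (i + 1) ω) + W (k + 1) ω) =
            (Real.log μ + (Real.log μ * k + ∑ i ∈ Finset.range k, W (i + 1) ω)) +
              W (k + 1) ω from by ring]
        simp only [Real.exp_add, Real.exp_log hμpos]
        ring
      rw [h5] at h4
      exact le_trans h3 h4
  -- bound over whole intervals
  have hbound : ∀ k, ∀ t ∈ Set.Icc (τ k) (τ (k + 1)),
      α₁ ‖x ω t‖ ≤ v 0 * Real.exp (e k) := by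
    intro k t ht
    have ht0 : 0 ≤ t := le_trans (hτnn k) ht.1
    have hs := (hsand (r k ω) t ht0 (x ω t)).1
    have h2 := hGr k t ht
    have hint : (∫ h in (τ k)..t, lam (r k ω) h) ≤ L * S (k + 1) ω := by
      have habs : ‖∫ h in (τ k)..t, lam (r k ω) h‖ ≤ L * |t - τ k| :=
        intervalIntegral.norm_integral_le_of_norm_le_const
          (fun s _ => by rw [Real.norm_eq_abs]; exact hlamL _ s)
      rw [Real.norm_eq_abs] at habs
      have h6 : |t - τ k| = t - τ k := abs_of_nonneg (by linarith [ht.1])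
      have h7 : t - τ k ≤ S (k + 1) ω := by
        have := ht.2
        rw [hτs k] at this
        linarith
      calc (∫ h in (τ k)..t, lam (r k ω) h) ≤ |∫ h in (τ k)..t, lam (r k ω) h| :=
            le_abs_self _
        _ ≤ L * |t - τ k| := habs
        _ = L * (t - τ k) := by rw [h6]
        _ ≤ L * S (k + 1) ω := mul_le_mul_of_nonneg_left h7 hL.le
    have h8 : V ω (r k ω) t (x ω t) ≤ v k * Real.exp (L * S (k + 1) ω) :=
      le_trans h2 (mul_le_mul_of_nonneg_left (Real.exp_le_exp.2 hint) (hvnn k))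
    have h9 : v k * Real.exp (L * S (k + 1) ω) ≤
        v 0 * Real.exp (Real.log μ * k + Sw k) * Real.exp (L * S (k + 1) ω) :=
      mul_le_mul_of_nonneg_right (hv k) (Real.exp_pos _).le
    have h10 : v 0 * Real.exp (Real.log μ * k + Sw k) * Real.exp (L * S (k + 1) ω) =
        v 0 * Real.exp (e k) := by
      rw [mul_assoc, ← Real.exp_add]
    linarith
  -- the bound tends to zero
  have hc0 : Tendsto (fun k => v 0 * Real.exp (e k)) atTop (𝓝 0) := by
    have h1 : Tendsto (fun k => Real.exp (e k)) atTop (𝓝 0) :=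
      Real.tendsto_exp_atBot.comp hetop
    have h2 := h1.const_mul (v 0)
    rw [mul_zero] at h2
    exact h2
  -- conclude
  rw [NormedAddCommGroup.tendsto_nhds_zero]
  intro ε hε
  have hαε : 0 < α₁ ε := by
    have h := hα₁.2.1 (Set.self_mem_Ici) (Set.mem_Ici.2 hε.le) hε
    rw [hα₁.2.2.1] at h
    exact h
  have hev : ∀ᶠ k in atTop, v 0 * Real.exp (e k) < α₁ ε :=
    hc0.eventually_lt_const hαε
  obtain ⟨K, hK⟩ := eventually_atTop.1 hev
  rw [eventually_atTop]
  refine ⟨τ K, fun t htK => ?_⟩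
  have ht0 : (0 : ℝ) ≤ t := le_trans (hτnn K) htK
  have hex : ∃ m, t < τ m := (hτtop.eventually_gt_atTop t).exists
  have hm0 : t < τ (Nat.find hex) := Nat.find_spec hex
  have hm0ne : Nat.find hex ≠ 0 := by
    intro h
    rw [h, hτ0] at hm0
    linarith
  obtain ⟨k, hk⟩ := Nat.exists_eq_succ_of_ne_zero hm0ne
  have hklt : τ k ≤ t := not_lt.1 (Nat.find_min hex (by omega))
  rw [hk] at hm0
  have hKk : K ≤ k := by
    by_contra h
    push_neg at h
    have : τ (k + 1) ≤ τ K := hτmono.monotone (by omega)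
    linarith
  have hb := hbound k t ⟨hklt, hm0.le⟩
  have hlt : α₁ ‖x ω t‖ < α₁ ε := lt_of_le_of_lt hb (hK k hKk)
  exact (hα₁.2.1.lt_iff_lt (Set.mem_Ici.2 (norm_nonneg _)) (Set.mem_Ici.2 hε.le)).1 hlt
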